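/- Let K be a compact convex set regularly embedded in a locally convex space E (via φ ∈ E*, K ⊆ φ⁻¹({1})), with induced positive cone K̃ and order on E. If (E, K̃) is a lattice, then for any r > 0 and a ∈ E, the intersection K ∩ (rK + a) is either empty, or equal to tK + c where c = 0 ∨ a and t = 1 − φ(c) ≥ 0. -/

import Mathlib

/-- The cone generated by a set `K`. -/
def coneOf {E : Type*} [AddCommGroup E] [Module ℝ E] (K : Set E) : Set E :=
  {y : E | ∃ α : ℝ, 0 ≤ α ∧ ∃ x ∈ K, y = α • x}

/-- The partial order on `E` induced by the cone generated by `K`. -/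
def coneLe {E : Type*} [AddCommGroup E] [Module ℝ E] (K : Set E) (x y : E) : Prop :=
  y - x ∈ coneOf K

/-- If `(E, K̃)` is a lattice, then for `r > 0` and `a ∈ E`, the intersection
`K ∩ (r K + a)` is either empty or equals `(1 − φ c) K + c` where `c = 0 ∨ a`
(and `1 − φ c ≥ 0`). -/
theorem lattice_implies_homothety_intersection
    {E : Type*} [AddCommGroup E] [Module ℝ E] [TopologicalSpace E]
    [IsTopologicalAddGroup E] [ContinuousSMul ℝ E] [LocallyConvexSpace ℝ E] [T2Space E]
    (K : Set E) (hKc : IsCompact K) (hKconv : Convex ℝ K) (hKne : K.Nonempty)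
    (φ : E →L[ℝ] ℝ) (hφ : ∀ x ∈ K, φ x = 1)
    (hlat : ∀ a b : E, ∃ c : E, coneLe K a c ∧ coneLe K b c ∧
      ∀ d : E, coneLe K a d → coneLe K b d → coneLe K c d)
    (r : ℝ) (hr : 0 < r) (a : E) (c : E)
    (hc : coneLe K 0 c ∧ coneLe K a c ∧
      ∀ d : E, coneLe K 0 d → coneLe K a d → coneLe K c d) :
    K ∩ ((fun x => r • x + a) '' K) = ∅ ∨
      (0 ≤ 1 - φ c ∧
        K ∩ ((fun x => r • x + a) '' K) = (fun x => (1 - φ c) • x + c) '' K) := by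
  obtain ⟨hc0, hca, hcmin⟩ := hc
  rw [coneLe, sub_zero] at hc0
  rw [coneLe] at hca
  rcases Set.eq_empty_or_nonempty (K ∩ ((fun x => r • x + a) '' K)) with he | hne
  · exact Or.inl he
  right
  obtain ⟨z, hzK, x₀, hx₀K, hx₀⟩ := hne
  simp only at hx₀
  -- the cone is closed under addition (by convexity of K)
  have hadd : ∀ u v : E, u ∈ coneOf K → v ∈ coneOf K → u + v ∈ coneOf K := by
    rintro u v ⟨α, hα, x, hxK, rfl⟩ ⟨β, hβ, y, hyK, rfl⟩
    rcases eq_or_lt_of_le (add_nonneg hα hβ) with hs | hs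
    · have hα0 : α = 0 := by linarith
      have hβ0 : β = 0 := by linarith
      exact ⟨0, le_refl 0, x, hxK, by simp [hα0, hβ0]⟩
    · have hne' : α + β ≠ 0 := ne_of_gt hs
      refine ⟨α + β, le_of_lt hs, (α/(α+β)) • x + (β/(α+β)) • y, ?_, ?_⟩
      · exact hKconv hxK hyK (by positivity) (by positivity) (by field_simp)
      · have h1 : (α + β) * (α/(α+β)) = α := by field_simp
        have h2 : (α + β) * (β/(α+β)) = β := by field_simp
        rw [smul_add, smul_smul, smul_smul, h1, h2]
  -- elements of the cone: φ is nonneg there and determines the scale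
  have hφc : ∀ u ∈ coneOf K, 0 ≤ φ u ∧ ∃ x ∈ K, u = (φ u) • x := by
    rintro u ⟨α, hα, x, hxK, rfl⟩
    have h : φ (α • x) = α := by rw [map_smul, hφ x hxK, smul_eq_mul, mul_one]
    exact ⟨by rw [h]; exact hα, x, hxK, by rw [h]⟩
  have hφz : φ z = 1 := hφ z hzK
  have hzcone : z ∈ coneOf K := ⟨1, zero_le_one, z, hzK, (one_smul ℝ z).symm⟩
  have hzac : z - a ∈ coneOf K := ⟨r, hr.le, x₀, hx₀K, by rw [← hx₀]; abel⟩
  have hzc : z - c ∈ coneOf K :=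
    hcmin z (by rw [coneLe, sub_zero]; exact hzcone) (by rw [coneLe]; exact hzac)
  have hφa : φ a = 1 - r := by
    have h1 : φ x₀ = 1 := hφ x₀ hx₀K
    have h2 : φ z = r * φ x₀ + φ a := by
      rw [← hx₀, map_add, map_smul, smul_eq_mul]
    rw [hφz, h1] at h2
    linarith
  have ht : 0 ≤ 1 - φ c := by
    have h1 := (hφc _ hzc).1
    have h2 : φ (z - c) = 1 - φ c := by rw [map_sub, hφz]
    linarith
  refine ⟨ht, ?_⟩
  ext w
  simp only [Set.mem_inter_iff, Set.mem_image]
  constructor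
  · rintro ⟨hwK, x, hxK, hwx⟩
    have hwcone : w ∈ coneOf K := ⟨1, zero_le_one, w, hwK, (one_smul ℝ w).symm⟩
    have hwa : w - a ∈ coneOf K := ⟨r, hr.le, x, hxK, by rw [← hwx]; abel⟩
    have hwc : w - c ∈ coneOf K :=
      hcmin w (by rw [coneLe, sub_zero]; exact hwcone) (by rw [coneLe]; exact hwa)
    obtain ⟨x', hx'K, hx'⟩ := (hφc _ hwc).2
    have hφwc : φ (w - c) = 1 - φ c := by rw [map_sub, hφ w hwK]
    rw [hφwc] at hx'
    exact ⟨x', hx'K, by rw [← hx']; abel⟩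
  · rintro ⟨x, hxK, hwx⟩
    have hxcone : (1 - φ c) • x ∈ coneOf K := ⟨1 - φ c, ht, x, hxK, rfl⟩
    have hwcone : w ∈ coneOf K := by rw [← hwx]; exact hadd _ _ hxcone hc0
    have hφw : φ w = 1 := by
      rw [← hwx, map_add, map_smul, hφ x hxK, smul_eq_mul, mul_one]; ring
    constructor
    · obtain ⟨x', hx'K, hx'⟩ := (hφc _ hwcone).2
      rw [hφw, one_smul] at hx'
      rwa [hx']
    · have hwa : w - a ∈ coneOf K := by
        have h : w - a = (1 - φ c) • x + (c - a) := by rw [← hwx]; abel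
        rw [h]; exact hadd _ _ hxcone hca
      obtain ⟨x', hx'K, hx'⟩ := (hφc _ hwa).2
      have hφwa : φ (w - a) = r := by rw [map_sub, hφw, hφa]; ring
      rw [hφwa] at hx'
      exact ⟨x', hx'K, by rw [← hx']; abel⟩
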